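/- (Weighted off-by-one ρ-hard IQC) Let f ∈ S(m,L) with u_⋆ = ∇f(y_⋆) and let 0 ≤ ρ̄ ≤ ρ ≤ 1. For any sequence y_0, y_1, ... in ℝ^d, writing ỹ_k = y_k - y_⋆ and ũ_k = ∇f(y_k) - u_⋆, we have for every k ≥ 0: (ũ_0 - mỹ_0)ᵀ(Lỹ_0 - ũ_0) + Σ_{t=1}^{k} ρ^{-2t}·(ũ_t - mỹ_t)ᵀ(L(ỹ_t - ρ̄²ỹ_{t-1}) - (ũ_t - ρ̄²ũ_{t-1})) ≥ 0. -/

import Mathlib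

open RealInnerProductSpace Finset

section Aux
variable {E : Type*} [NormedAddCommGroup E] [InnerProductSpace ℝ E] [CompleteSpace E]


lemma line_hasDerivAt (e : E → ℝ) (ge : E → E) (h : ∀ z, HasGradientAt e (ge z) z)
    (x y : E) (t : ℝ) :
    HasDerivAt (fun s : ℝ => e (y + s • (x - y))) ⟪ge (y + t • (x - y)), x - y⟫ t := by
  have hc : HasDerivAt (fun s : ℝ => y + s • (x - y)) (x - y) t := by
    simpa using ((hasDerivAt_id t).smul_const (x - y)).const_add y
  have h2 := (hasGradientAt_iff_hasFDerivAt.mp (h (y + t • (x - y)))).comp_hasDerivAt t hc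
  exact h2

/-- descent lemma -/
lemma descent_lemma (e : E → ℝ) (ge : E → E) (h : ∀ z, HasGradientAt e (ge z) z)
    (M : ℝ) (hup : ∀ a b, ⟪ge a - ge b, a - b⟫ ≤ M * ‖a - b‖ ^ 2) (x y : E) :
    e x ≤ e y + ⟪ge y, x - y⟫ + M / 2 * ‖x - y‖ ^ 2 := by
  set φ : ℝ → ℝ := fun s =>
    s * ⟪ge y, x - y⟫ + M / 2 * s ^ 2 * ‖x - y‖ ^ 2 - e (y + s • (x - y)) with hφ
  have hd : ∀ t : ℝ, HasDerivAt φ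
      (⟪ge y, x - y⟫ + M * t * ‖x - y‖ ^ 2 - ⟪ge (y + t • (x - y)), x - y⟫) t := by
    intro t
    have hq : HasDerivAt (fun s : ℝ => s * ⟪ge y, x - y⟫ + M / 2 * s ^ 2 * ‖x - y‖ ^ 2)
        (⟪ge y, x - y⟫ + M * t * ‖x - y‖ ^ 2) t := by
      have h1 : HasDerivAt (fun s : ℝ => s * ⟪ge y, x - y⟫) ⟪ge y, x - y⟫ t := by
        simpa using (hasDerivAt_id t).mul_const _
      have h2 : HasDerivAt (fun s : ℝ => M / 2 * s ^ 2 * ‖x - y‖ ^ 2)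
          (M * t * ‖x - y‖ ^ 2) t := by
        have := ((hasDerivAt_pow 2 t).const_mul (M / 2)).mul_const (‖x - y‖ ^ 2)
        refine this.congr_deriv ?_
        ring
      exact h1.add h2
    exact hq.sub (line_hasDerivAt e ge h x y t)
  have hmon : MonotoneOn φ (Set.Icc (0:ℝ) 1) := by
    apply monotoneOn_of_deriv_nonneg (convex_Icc 0 1)
    · exact Continuous.continuousOn
        (Differentiable.continuous (fun t => (hd t).differentiableAt))
    · intro t ht
      exact ((hd t).differentiableAt.differentiableWithinAt)
    · intro t ht
      rw [(hd t).deriv]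
      rw [interior_Icc] at ht
      have h1 := hup (y + t • (x - y)) y
      have he : y + t • (x - y) - y = t • (x - y) := by abel
      rw [he, real_inner_smul_right, norm_smul] at h1
      have ht0 : 0 < t := ht.1
      have h2 : ⟪ge (y + t • (x - y)) - ge y, x - y⟫ ≤ M * t * ‖x - y‖ ^ 2 := by
        rw [mul_pow, Real.norm_eq_abs, sq_abs] at h1
        nlinarith
      rw [inner_sub_left] at h2
      linarith
  have := hmon (Set.mem_Icc.mpr ⟨le_refl 0, zero_le_one⟩)
    (Set.mem_Icc.mpr ⟨zero_le_one, le_refl 1⟩) zero_le_one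
  simp [hφ] at this
  linarith

/-- convexity lower bound -/
lemma convex_lower (e : E → ℝ) (ge : E → E) (h : ∀ z, HasGradientAt e (ge z) z)
    (hmono : ∀ a b, 0 ≤ ⟪ge a - ge b, a - b⟫) (x y : E) :
    e y + ⟪ge y, x - y⟫ ≤ e x := by
  set φ : ℝ → ℝ := fun s => e (y + s • (x - y)) - s * ⟪ge y, x - y⟫ with hφ
  have hd : ∀ t : ℝ, HasDerivAt φ (⟪ge (y + t • (x - y)), x - y⟫ - ⟪ge y, x - y⟫) t := by
    intro t
    exact (line_hasDerivAt e ge h x y t).sub (by simpa using (hasDerivAt_id t).mul_const _)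
  have hmon : MonotoneOn φ (Set.Icc (0:ℝ) 1) := by
    apply monotoneOn_of_deriv_nonneg (convex_Icc 0 1)
    · exact Continuous.continuousOn (by
        have : ∀ t, DifferentiableAt ℝ φ t := fun t => (hd t).differentiableAt
        exact Differentiable.continuous (fun t => this t))
    · intro t ht
      exact ((hd t).differentiableAt.differentiableWithinAt)
    · intro t ht
      rw [(hd t).deriv]
      rw [interior_Icc] at ht
      have h1 := hmono (y + t • (x - y)) y
      have : y + t • (x - y) - y = t • (x - y) := by abel
      rw [this, real_inner_smul_right] at h1
      have h2 : 0 ≤ ⟪ge (y + t • (x - y)) - ge y, x - y⟫ :=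
        nonneg_of_mul_nonneg_right h1 ht.1
      rw [inner_sub_left] at h2
      linarith
  have := hmon (Set.mem_Icc.mpr ⟨le_refl 0, zero_le_one⟩)
    (Set.mem_Icc.mpr ⟨zero_le_one, le_refl 1⟩) zero_le_one
  simp [hφ] at this
  linarith

/-- interpolation inequality -/
lemma interp_ineq (e : E → ℝ) (ge : E → E) (h : ∀ z, HasGradientAt e (ge z) z)
    (M : ℝ) (hM : 0 < M)
    (hmono : ∀ a b, 0 ≤ ⟪ge a - ge b, a - b⟫)
    (hup : ∀ a b, ⟪ge a - ge b, a - b⟫ ≤ M * ‖a - b‖ ^ 2) (x y : E) :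
    e y + ⟪ge y, x - y⟫ + (2 * M)⁻¹ * ‖ge x - ge y‖ ^ 2 ≤ e x := by
  set g := ge x - ge y with hg
  set z := x - M⁻¹ • g with hz
  have hA := convex_lower e ge h hmono z y
  have hB := descent_lemma e ge h M hup z x
  have hzx : z - x = -(M⁻¹ • g) := by rw [hz]; abel
  have hzy : z - y = (x - y) - M⁻¹ • g := by rw [hz]; abel
  have e1 : ⟪ge x, z - x⟫ = -(M⁻¹ * ⟪ge x, g⟫) := by
    rw [hzx, inner_neg_right, real_inner_smul_right]
  have e2 : ⟪ge y, z - y⟫ = ⟪ge y, x - y⟫ - M⁻¹ * ⟪ge y, g⟫ := by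
    rw [hzy, inner_sub_right, real_inner_smul_right]
  have e3 : ‖z - x‖ ^ 2 = M⁻¹ ^ 2 * ‖g‖ ^ 2 := by
    rw [hzx, norm_neg, norm_smul, Real.norm_eq_abs, mul_pow, sq_abs]
  have e4 : ⟪ge x, g⟫ - ⟪ge y, g⟫ = ‖g‖ ^ 2 := by
    rw [← inner_sub_left, ← hg, real_inner_self_eq_norm_sq]
  rw [e1, e3] at hB
  rw [e2] at hA
  have hM' : M ≠ 0 := ne_of_gt hM
  have key : M⁻¹ * ⟪ge x, g⟫ - M⁻¹ * ⟪ge y, g⟫ = M⁻¹ * ‖g‖ ^ 2 := by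
    rw [← mul_sub, e4]
  have h5 : M / 2 * (M⁻¹ ^ 2 * ‖g‖ ^ 2) = (2 * M)⁻¹ * ‖g‖ ^ 2 := by
    field_simp
  have h6 : M⁻¹ * ‖g‖ ^ 2 - (2 * M)⁻¹ * ‖g‖ ^ 2 = (2 * M)⁻¹ * ‖g‖ ^ 2 := by
    field_simp; ring
  nlinarith [hA, hB]


lemma grad_aux (f : E → ℝ) (gf : E → E) (hgrad : ∀ x, HasGradientAt f (gf x) x)
    (m : ℝ) (a : E) (z : E) :
    HasGradientAt (fun w => f w - m / 2 * ‖w‖ ^ 2 - ⟪a, w⟫) (gf z - m • z - a) z := by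
  rw [hasGradientAt_iff_hasFDerivAt]
  have h1 : HasFDerivAt f (InnerProductSpace.toDual ℝ E (gf z)) z :=
    hasGradientAt_iff_hasFDerivAt.mp (hgrad z)
  have h2 : HasFDerivAt (fun w : E => ⟪w, w⟫)
      ((fderivInnerCLM ℝ (z, z)).comp ((ContinuousLinearMap.id ℝ E).prod
        (ContinuousLinearMap.id ℝ E))) z :=
    (hasFDerivAt_id z).inner ℝ (hasFDerivAt_id z)
  have h2' : HasFDerivAt (fun w : E => m / 2 * ‖w‖ ^ 2)
      ((m / 2) • ((fderivInnerCLM ℝ (z, z)).comp ((ContinuousLinearMap.id ℝ E).prod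
        (ContinuousLinearMap.id ℝ E)))) z := by
    have := h2.const_mul (m / 2)
    have heq : (fun w : E => m / 2 * ‖w‖ ^ 2) = fun w : E => m / 2 * ⟪w, w⟫ := by
      funext w; rw [real_inner_self_eq_norm_sq]
    rw [heq]
    exact this
  have h3 : HasFDerivAt (fun w : E => ⟪a, w⟫) (innerSL ℝ a) z := (innerSL ℝ a).hasFDerivAt
  have h4 := (h1.sub h2').sub h3
  refine h4.congr_fderiv ?_
  ext v
  simp [inner_sub_left, real_inner_smul_left, fderivInnerCLM_apply, InnerProductSpace.toDual_apply_apply]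
  ring_nf
  rw [real_inner_comm z v]
  ring

end Aux


set_option maxHeartbeats 1000000 in
/-- The weighted off-by-one `ρ`-hard IQC satisfied by gradients of functions in
`S(m,L)`, for any `0 ≤ ρ̄ ≤ ρ ≤ 1`. -/
theorem weighted_off_by_one_rho_hard_iqc {d : ℕ} (m L : ℝ) (hm : 0 < m) (hmL : m < L)
    (ρbar ρ : ℝ) (h0 : 0 ≤ ρbar) (h1 : ρbar ≤ ρ) (h2 : ρ ≤ 1)
    (f : EuclideanSpace ℝ (Fin d) → ℝ)
    (gf : EuclideanSpace ℝ (Fin d) → EuclideanSpace ℝ (Fin d))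
    (hgrad : ∀ x, HasGradientAt f (gf x) x)
    (hlow : ∀ x y, m * ‖x - y‖ ^ 2 ≤ ⟪gf x - gf y, x - y⟫)
    (hup : ∀ x y, ⟪gf x - gf y, x - y⟫ ≤ L * ‖x - y‖ ^ 2)
    (ystar : EuclideanSpace ℝ (Fin d))
    (y : ℕ → EuclideanSpace ℝ (Fin d)) :
    ∀ k : ℕ,
      0 ≤ ⟪gf (y 0) - gf ystar - m • (y 0 - ystar),
            L • (y 0 - ystar) - (gf (y 0) - gf ystar)⟫ +
          ∑ t ∈ Icc 1 k,
            (ρ ^ (2 * t))⁻¹ *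
              ⟪gf (y t) - gf ystar - m • (y t - ystar),
                L • ((y t - ystar) - ρbar ^ 2 • (y (t - 1) - ystar))
                  - ((gf (y t) - gf ystar) - ρbar ^ 2 • (gf (y (t - 1)) - gf ystar))⟫ := by
  intro k
  set M : ℝ := L - m with hM
  have hMpos : 0 < M := sub_pos.mpr hmL
  set av := gf ystar - m • ystar with hav
  set e : EuclideanSpace ℝ (Fin d) → ℝ := fun w => f w - m / 2 * ‖w‖ ^ 2 - ⟪av, w⟫ with he
  set ge : EuclideanSpace ℝ (Fin d) → EuclideanSpace ℝ (Fin d) :=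
    fun w => gf w - m • w - av with hge
  have hgegrad : ∀ z, HasGradientAt e (ge z) z := fun z => grad_aux f gf hgrad m av z
  have hge_star : ge ystar = 0 := by simp [hge, hav]
  have hmono : ∀ a b, 0 ≤ ⟪ge a - ge b, a - b⟫ := by
    intro a b
    have hab : ge a - ge b = gf a - gf b - m • (a - b) := by
      simp only [hge]; module
    rw [hab, inner_sub_left, real_inner_smul_left, real_inner_self_eq_norm_sq]
    have := hlow a b
    linarith
  have hupM : ∀ a b, ⟪ge a - ge b, a - b⟫ ≤ M * ‖a - b‖ ^ 2 := by
    intro a b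
    have hab : ge a - ge b = gf a - gf b - m • (a - b) := by
      simp only [hge]; module
    rw [hab, inner_sub_left, real_inner_smul_left, real_inner_self_eq_norm_sq, hM]
    have := hup a b
    nlinarith [sq_nonneg ‖a - b‖]
  -- premultiplied interpolation inequality
  have hinterp : ∀ a b, 2 * M * e b + 2 * M * ⟪ge b, a - b⟫ + ‖ge a - ge b‖ ^ 2
      ≤ 2 * M * e a := by
    intro a b
    have h' := interp_ineq e ge hgegrad M hMpos hmono hupM a b
    have h2 := mul_le_mul_of_nonneg_left h' (by linarith : (0:ℝ) ≤ 2 * M)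
    rw [mul_add, mul_add, ← mul_assoc, mul_inv_cancel₀ (by linarith : (2:ℝ) * M ≠ 0),
      one_mul] at h2
    exact h2
  clear_value av
  set u : ℕ → EuclideanSpace ℝ (Fin d) := fun t => ge (y t) with hu
  set ε : ℕ → ℝ := fun t => e (y t) - e ystar with hε
  set φ : ℕ → ℝ := fun t => M * ε t - ‖u t‖ ^ 2 / 2 with hφ
  set A : ℕ → ℝ := fun t => ⟪u t, y t - ystar⟫ with hA
  set B : ℕ → ℝ := fun t => ⟪u (t + 1), y t - ystar⟫ with hB
  set C : ℕ → ℝ := fun t => ⟪u (t + 1), u t⟫ with hC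
  clear_value C B A φ ε u ge e M
  -- φ is nonnegative
  have hφ0 : ∀ t, 0 ≤ φ t := by
    intro t
    have h' := hinterp (y t) ystar
    rw [hge_star] at h'
    simp only [inner_zero_left, sub_zero, mul_zero, add_zero] at h'
    simp only [hφ, hε, hu]
    nlinarith [h']
  -- sector-type bound
  have hF2 : ∀ t, M * ε t + ‖u t‖ ^ 2 / 2 ≤ M * A t := by
    intro t
    have h' := hinterp ystar (y t)
    have hys : ystar - y t = -(y t - ystar) := by abel
    rw [hge_star, hys, inner_neg_right, zero_sub, norm_neg] at h'
    simp only [hε, hA, hu]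
    nlinarith [h']
  -- off-by-one-type bound
  have hF3 : ∀ t, M * ε (t + 1) - M * ε t
      + (‖u (t + 1)‖ ^ 2 - 2 * C t + ‖u t‖ ^ 2) / 2 ≤ M * A (t + 1) - M * B t := by
    intro t
    have h' := hinterp (y t) (y (t + 1))
    have hys : y t - y (t + 1) = (y t - ystar) - (y (t + 1) - ystar) := by abel
    rw [hys, inner_sub_right] at h'
    have hnn : ‖ge (y t) - ge (y (t + 1))‖ ^ 2
        = ‖u (t + 1)‖ ^ 2 - 2 * C t + ‖u t‖ ^ 2 := by
      rw [norm_sub_rev, @norm_sub_sq_real]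
      simp only [hu, hC] <;> ring
    rw [hnn] at h'
    simp only [hε, hA, hB, hC, hu] at h' ⊢
    nlinarith [h']
  -- identify the base term
  have hBase : ⟪gf (y 0) - gf ystar - m • (y 0 - ystar),
      L • (y 0 - ystar) - (gf (y 0) - gf ystar)⟫ = M * A 0 - ‖u 0‖ ^ 2 := by
    have e1 : gf (y 0) - gf ystar - m • (y 0 - ystar) = u 0 := by
      simp only [hu, hge, hav]; module
    have e2 : L • (y 0 - ystar) - (gf (y 0) - gf ystar)
        = M • (y 0 - ystar) - u 0 := by
      simp only [hu, hge, hav, hM]; module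
    rw [e1, e2, inner_sub_right, real_inner_smul_right, real_inner_self_eq_norm_sq, hA]
  -- identify the general term
  have hTerm : ∀ t : ℕ,
      ⟪gf (y (t + 1)) - gf ystar - m • (y (t + 1) - ystar),
        L • ((y (t + 1) - ystar) - ρbar ^ 2 • (y t - ystar))
          - ((gf (y (t + 1)) - gf ystar) - ρbar ^ 2 • (gf (y t) - gf ystar))⟫
      = M * A (t + 1) - ‖u (t + 1)‖ ^ 2 - ρbar ^ 2 * (M * B t - C t) := by
    intro t
    have e1 : gf (y (t + 1)) - gf ystar - m • (y (t + 1) - ystar) = u (t + 1) := by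
      simp only [hu, hge, hav]; module
    have e2 : L • ((y (t + 1) - ystar) - ρbar ^ 2 • (y t - ystar))
        - ((gf (y (t + 1)) - gf ystar) - ρbar ^ 2 • (gf (y t) - gf ystar))
        = M • (y (t + 1) - ystar) - u (t + 1)
          - ρbar ^ 2 • (M • (y t - ystar) - u t) := by
      simp only [hu, hge, hav, hM]; module
    rw [e1, e2]
    simp only [inner_sub_right, real_inner_smul_right, real_inner_self_eq_norm_sq,
      hA, hB, hC] <;> ring
  -- pointwise bound on the general term
  have hb2 : ρbar ^ 2 ≤ 1 := by nlinarith
  have hb0 : 0 ≤ ρbar ^ 2 := sq_nonneg _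
  have hT : ∀ t, φ (t + 1) - ρbar ^ 2 * φ t
      ≤ M * A (t + 1) - ‖u (t + 1)‖ ^ 2 - ρbar ^ 2 * (M * B t - C t) := by
    intro t
    have hX : 0 ≤ M * A (t + 1) - M * ε (t + 1) - ‖u (t + 1)‖ ^ 2 / 2 := by
      have := hF2 (t + 1); linarith
    have hY : 0 ≤ M * A (t + 1) - M * B t - (M * ε (t + 1) - M * ε t)
        - (‖u (t + 1)‖ ^ 2 - 2 * C t + ‖u t‖ ^ 2) / 2 := by
      have := hF3 t; linarith
    have h1' : 0 ≤ (1 - ρbar ^ 2) *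
        (M * A (t + 1) - M * ε (t + 1) - ‖u (t + 1)‖ ^ 2 / 2) :=
      mul_nonneg (by linarith) hX
    have h2' : 0 ≤ ρbar ^ 2 * (M * A (t + 1) - M * B t - (M * ε (t + 1) - M * ε t)
        - (‖u (t + 1)‖ ^ 2 - 2 * C t + ‖u t‖ ^ 2) / 2) := mul_nonneg hb0 hY
    simp only [hφ]
    nlinarith [h1', h2']
  rcases eq_or_lt_of_le (le_trans h0 h1) with hρ0 | hρpos
  · -- ρ = 0: all weighted terms vanish
    rw [hBase]
    have hsum : ∑ t ∈ Icc 1 k,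
        (ρ ^ (2 * t))⁻¹ *
          ⟪gf (y t) - gf ystar - m • (y t - ystar),
            L • ((y t - ystar) - ρbar ^ 2 • (y (t - 1) - ystar))
              - ((gf (y t) - gf ystar) - ρbar ^ 2 • (gf (y (t - 1)) - gf ystar))⟫ = 0 := by
      apply Finset.sum_eq_zero
      intro t ht
      have ht1 : 1 ≤ t := (Finset.mem_Icc.mp ht).1
      rw [← hρ0, zero_pow (by omega : 2 * t ≠ 0), inv_zero, zero_mul]
    rw [hsum, add_zero]
    have h3 := hφ0 0
    have h4 := hF2 0
    simp only [hφ] at h3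
    linarith
  · -- ρ > 0
    have key : ∀ n : ℕ, (ρ ^ (2 * n))⁻¹ * φ n ≤
        ⟪gf (y 0) - gf ystar - m • (y 0 - ystar),
            L • (y 0 - ystar) - (gf (y 0) - gf ystar)⟫ +
          ∑ t ∈ Icc 1 n,
            (ρ ^ (2 * t))⁻¹ *
              ⟪gf (y t) - gf ystar - m • (y t - ystar),
                L • ((y t - ystar) - ρbar ^ 2 • (y (t - 1) - ystar))
                  - ((gf (y t) - gf ystar) - ρbar ^ 2 • (gf (y (t - 1)) - gf ystar))⟫ := by
      intro n
      induction n with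
      | zero =>
        rw [hBase]
        simp only [Nat.mul_zero, pow_zero, inv_one, one_mul]
        rw [show Icc 1 0 = (∅ : Finset ℕ) from rfl, Finset.sum_empty, add_zero]
        have h4 := hF2 0
        simp only [hφ]
        linarith
      | succ n ih =>
        rw [Finset.sum_Icc_succ_top (by omega : 1 ≤ n + 1)]
        have hidx : (n + 1) - 1 = n := by omega
        rw [hidx, hTerm n]
        have hWpos : 0 < (ρ ^ (2 * n))⁻¹ := by positivity
        have hVpos : 0 < ((ρ:ℝ) ^ 2)⁻¹ := by positivity
        have hWV : (ρ ^ (2 * (n + 1)))⁻¹ = (ρ ^ (2 * n))⁻¹ * (ρ ^ 2)⁻¹ := by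
          rw [show 2 * (n + 1) = 2 * n + 2 by ring, pow_add, mul_inv]
        have hbV : ρbar ^ 2 * (ρ ^ 2)⁻¹ ≤ 1 := by
          have hρ2 : ρbar ^ 2 ≤ ρ ^ 2 := by nlinarith
          have h5 := mul_le_mul_of_nonneg_right hρ2 hVpos.le
          rwa [mul_inv_cancel₀ (by positivity : (ρ:ℝ) ^ 2 ≠ 0)] at h5
        rw [hWV]
        have hTn := hT n
        have hp1 : 0 ≤ (ρ ^ (2 * n))⁻¹ * (ρ ^ 2)⁻¹ * ((M * A (n + 1) - ‖u (n + 1)‖ ^ 2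
            - ρbar ^ 2 * (M * B n - C n)) - (φ (n + 1) - ρbar ^ 2 * φ n)) :=
          mul_nonneg (mul_nonneg hWpos.le hVpos.le) (by linarith)
        have hp2 : 0 ≤ (ρ ^ (2 * n))⁻¹ * φ n * (1 - ρbar ^ 2 * (ρ ^ 2)⁻¹) :=
          mul_nonneg (mul_nonneg hWpos.le (hφ0 n)) (by linarith)
        nlinarith [ih, hp1, hp2]
    have hk := key k
    have hnn : 0 ≤ (ρ ^ (2 * k))⁻¹ * φ k :=
      mul_nonneg (by positivity) (hφ0 k)
    linarith
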